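/- The uncentred base maximal operator ℬ^u is of weak type (1,1) with constant 2: for every f ∈ L^1(𝔗) and every α > 0, |{x : ℬ^u f(x) > α}| ≤ (2/α)‖f‖_1. -/

import Mathlib

open scoped ENNReal NNReal
open Set

/-- A locally finite tree presented via the data induced by a fixed geodesic ray `ω`:
a predecessor map `pred`, a height (Busemann) function `ht` increasing by one along `pred`,
finite successor sets, and connectedness (any two vertices have a common ancestor). -/
structure TreeData (V : Type*) where
  pred : V → V
  ht : V → ℤ
  ht_pred : ∀ x, ht (pred x) = ht x + 1
  fiber_finite : ∀ x, {y | pred y = x}.Finite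
  connected : ∀ x y, ∃ k l : ℕ, pred^[k] x = pred^[l] y

namespace TreeData

variable {V : Type*}

/-- The set of successors of a vertex. -/
def succs (t : TreeData V) (x : V) : Set V := {y | t.pred y = x}

/-- Every vertex has at least 3 neighbours, i.e. at least 2 successors. -/
def Thick (t : TreeData V) : Prop := ∀ x, 2 ≤ (t.succs x).ncard

/-- Homogeneous tree `𝔗_b`: every vertex has exactly `b+1` neighbours, i.e. `b` successors. -/
def Homog (t : TreeData V) (b : ℕ) : Prop := ∀ x, (t.succs x).ncard = b

/-- The triangle with vertex `x` and height `R`: all descendants of `x` within `R` generations. -/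
def tri (t : TreeData V) (x : V) (R : ℕ) : Set V := {y | ∃ j ≤ R, t.pred^[j] y = x}

/-- The base of the triangle with vertex `x` and height `R`: the `R`-fold successors of `x`. -/
def base (t : TreeData V) (x : V) (R : ℕ) : Set V := {y | t.pred^[R] y = x}

/-- The graph distance on the tree. -/
noncomputable def dist (t : TreeData V) (x y : V) : ℕ :=
  sInf {n | ∃ k l : ℕ, k + l = n ∧ t.pred^[k] x = t.pred^[l] y}

/-- Number of points of a set, as an element of `ℝ≥0∞` (counting measure). -/
noncomputable def esize (E : Set V) : ℝ≥0∞ := ∑' _ : E, (1 : ℝ≥0∞)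

/-- The average of `|f|` over a set, with respect to counting measure. -/
noncomputable def setAvg (t : TreeData V) (S : Set V) (f : V → ℝ) : ℝ≥0∞ :=
  (∑' y : S, (‖f y‖₊ : ℝ≥0∞)) / (S.ncard : ℝ≥0∞)

/-- The centred triangular maximal operator `𝒯`. -/
noncomputable def cmax (t : TreeData V) (f : V → ℝ) (x : V) : ℝ≥0∞ :=
  ⨆ R : ℕ, t.setAvg (t.tri x R) f

/-- The uncentred triangular maximal operator `𝒰`. -/
noncomputable def umax (t : TreeData V) (f : V → ℝ) (x : V) : ℝ≥0∞ :=
  ⨆ (v : V) (R : ℕ) (_ : x ∈ t.tri v R), t.setAvg (t.tri v R) f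

/-- The uncentred base maximal operator `ℬᵘ`. -/
noncomputable def ubmax (t : TreeData V) (f : V → ℝ) (x : V) : ℝ≥0∞ :=
  ⨆ (v : V) (R : ℕ) (_ : x ∈ t.tri v R), t.setAvg (t.base v R) f

/-- The modified triangle `T'_r(x) = T_r(x) ∪ {p^r(x)}`. -/
def mtri (t : TreeData V) (x : V) (r : ℕ) : Set V := t.tri x r ∪ {t.pred^[r] x}

/-- The modified centred triangular maximal operator `𝒯'`. -/
noncomputable def cmax' (t : TreeData V) (f : V → ℝ) (x : V) : ℝ≥0∞ :=
  ⨆ r : ℕ, t.setAvg (t.mtri x r) f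

/-- The modified uncentred triangular maximal operator `𝒰'`. -/
noncomputable def umax' (t : TreeData V) (f : V → ℝ) (x : V) : ℝ≥0∞ :=
  ⨆ (v : V) (r : ℕ) (_ : x ∈ t.mtri v r), t.setAvg (t.mtri v r) f

/-- The `ℓ^p` norm with respect to counting measure, for `p ∈ [1,∞]`. -/
noncomputable def eLp (p : ℝ≥0∞) (g : V → ℝ≥0∞) : ℝ≥0∞ :=
  if p = ∞ then ⨆ v, g v else (∑' v, g v ^ p.toReal) ^ (1 / p.toReal)

/-- `|f|` as an `ℝ≥0∞`-valued function. -/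
noncomputable def nn (f : V → ℝ) (x : V) : ℝ≥0∞ := (‖f x‖₊ : ℝ≥0∞)

/-- The point mass at `o`. -/
noncomputable def delta (o : V) : V → ℝ := ({o} : Set V).indicator fun _ => 1

end TreeData


section Aux
variable {V : Type*}

lemma esize_eq_tsum_indicator (E : Set V) :
    (∑' _ : E, (1:ℝ≥0∞)) = ∑' x, E.indicator (fun _ => (1:ℝ≥0∞)) x :=
  (tsum_subtype E fun _ => (1:ℝ≥0∞))

lemma aux_esize_mono {E F : Set V} (h : E ⊆ F) :
    (∑' _ : E, (1:ℝ≥0∞)) ≤ ∑' _ : F, (1:ℝ≥0∞) := by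
  rw [esize_eq_tsum_indicator, esize_eq_tsum_indicator]
  refine ENNReal.tsum_le_tsum fun x => ?_
  exact Set.indicator_le_indicator_of_subset h (fun _ => zero_le) x

lemma aux_esize_iUnion_le {ι : Type*} (S : ι → Set V) :
    (∑' _ : (⋃ i, S i), (1:ℝ≥0∞)) ≤ ∑' i, ∑' _ : S i, (1:ℝ≥0∞) := by
  rw [esize_eq_tsum_indicator]
  have : ∀ i, (∑' _ : S i, (1:ℝ≥0∞)) = ∑' x, (S i).indicator (fun _ => (1:ℝ≥0∞)) x :=
    fun i => esize_eq_tsum_indicator (S i)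
  simp_rw [this]
  rw [ENNReal.tsum_comm]
  refine ENNReal.tsum_le_tsum fun x => ?_
  by_cases hx : x ∈ ⋃ i, S i
  · obtain ⟨i, hi⟩ := Set.mem_iUnion.1 hx
    calc (⋃ i, S i).indicator (fun _ => (1:ℝ≥0∞)) x = 1 := Set.indicator_of_mem hx _
    _ = (S i).indicator (fun _ => (1:ℝ≥0∞)) x := (Set.indicator_of_mem hi (fun _ => (1:ℝ≥0∞))).symm
    _ ≤ _ := ENNReal.le_tsum i
  · simp [Set.indicator_of_notMem hx]

lemma aux_esize_finite {S : Set V} (hS : S.Finite) :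
    (∑' _ : S, (1:ℝ≥0∞)) = S.ncard := by
  have := hS.fintype
  rw [tsum_fintype]
  rw [Finset.sum_const, Finset.card_univ, nsmul_eq_mul, mul_one, ← Nat.card_eq_fintype_card,
    Nat.card_coe_set_eq]

lemma aux_tsum_disjoint_le {ι : Type*} (g : V → ℝ≥0∞) (S : ι → Set V)
    (hd : Pairwise (Function.onFun Disjoint S)) :
    ∑' i, ∑' y : S i, g y ≤ ∑' y, g y := by
  have h1 : ∀ i, (∑' y : S i, g y) = ∑' y, (S i).indicator g y := fun i => tsum_subtype _ g
  simp_rw [h1]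
  rw [ENNReal.tsum_comm]
  refine ENNReal.tsum_le_tsum fun y => ?_
  by_cases hy : ∃ i, y ∈ S i
  · obtain ⟨i, hi⟩ := hy
    have : (∑' j, (S j).indicator g y) = (S i).indicator g y := by
      refine tsum_eq_single i fun j hj => ?_
      refine Set.indicator_of_notMem (fun hyj => ?_) g
      exact (hd hj).le_bot ⟨hyj, hi⟩
    rw [this, Set.indicator_of_mem hi]
  · push_neg at hy
    simp [Set.indicator_of_notMem (hy _)]
end Aux

section Tree
variable {V : Type*} (t : TreeData V)

lemma base_zero (v : V) : t.base v 0 = {v} := by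
  ext y; simp [TreeData.base]

lemma base_succ (v : V) (R : ℕ) : t.base v (R+1) = t.pred ⁻¹' (t.base v R) := by
  ext y; simp [TreeData.base, Function.iterate_succ_apply]

lemma preimage_eq_biUnion (S : Set V) : t.pred ⁻¹' S = ⋃ z ∈ S, t.succs z := by
  ext y
  simp only [Set.mem_preimage, Set.mem_iUnion, TreeData.succs, Set.mem_setOf_eq]
  exact ⟨fun h => ⟨_, h, rfl⟩, fun ⟨z, hz, he⟩ => he ▸ hz⟩

lemma preimage_finite {S : Set V} (hS : S.Finite) : (t.pred ⁻¹' S).Finite := by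
  rw [preimage_eq_biUnion]
  exact hS.biUnion fun z _ => t.fiber_finite z

lemma base_finite (v : V) (R : ℕ) : (t.base v R).Finite := by
  induction R with
  | zero => rw [base_zero]; exact Set.finite_singleton v
  | succ R ih => rw [base_succ]; exact preimage_finite t ih

lemma card_preimage (hthick : t.Thick) {S : Set V} (hS : S.Finite) :
    2 * S.ncard ≤ (t.pred ⁻¹' S).ncard := by
  classical
  have hfin := preimage_finite t hS
  set F : Finset V := hS.toFinset with hF
  set B : Finset V := F.biUnion (fun z => (t.fiber_finite z).toFinset) with hB
  have hBeq : t.pred ⁻¹' S = ↑B := by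
    ext y
    simp only [hB, Finset.coe_biUnion, Set.mem_iUnion, Finset.mem_coe,
      Set.Finite.mem_toFinset, Set.mem_preimage, hF, Set.mem_setOf_eq]
    exact ⟨fun h => ⟨_, h, rfl⟩, fun ⟨z, hz, he⟩ => he ▸ hz⟩
  have hdisj : ∀ z ∈ F, ∀ w ∈ F, z ≠ w →
      Disjoint ((t.fiber_finite z).toFinset) ((t.fiber_finite w).toFinset) := by
    intro z _ w _ hzw
    refine Finset.disjoint_left.2 fun y hy hy' => ?_
    simp only [Set.Finite.mem_toFinset, Set.mem_setOf_eq] at hy hy'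
    exact hzw (hy ▸ hy')
  have hcard : B.card = ∑ z ∈ F, ((t.fiber_finite z).toFinset).card :=
    Finset.card_biUnion hdisj
  have h2 : ∀ z ∈ F, 2 ≤ ((t.fiber_finite z).toFinset).card := by
    intro z _
    have h := hthick z
    rw [show t.succs z = {y | t.pred y = z} from rfl,
      Set.ncard_eq_toFinset_card _ (t.fiber_finite z)] at h
    exact h
  calc 2 * S.ncard = ∑ _z ∈ F, 2 := by
        rw [Finset.sum_const, smul_eq_mul, mul_comm, Set.ncard_eq_toFinset_card _ hS]
    _ ≤ ∑ z ∈ F, ((t.fiber_finite z).toFinset).card := Finset.sum_le_sum h2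
    _ = B.card := hcard.symm
    _ = (t.pred ⁻¹' S).ncard := by rw [hBeq, Set.ncard_coe_finset]

lemma card_base_step (hthick : t.Thick) (v : V) (R : ℕ) :
    2 * (t.base v R).ncard ≤ (t.base v (R+1)).ncard := by
  rw [base_succ]
  exact card_preimage t hthick (base_finite t v R)

lemma card_base_ge (hthick : t.Thick) (v : V) (j d : ℕ) :
    2^d * (t.base v j).ncard ≤ (t.base v (j+d)).ncard := by
  induction d with
  | zero => simp
  | succ d ih =>
    have h1 := card_base_step t hthick v (j+d)
    calc 2^(d+1) * (t.base v j).ncard = 2 * (2^d * (t.base v j).ncard) := by ring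
      _ ≤ 2 * (t.base v (j+d)).ncard := by omega
      _ ≤ (t.base v (j+d+1)).ncard := h1

lemma two_pow_le_card_base (hthick : t.Thick) (v : V) (R : ℕ) :
    2^R ≤ (t.base v R).ncard := by
  have := card_base_ge t hthick v 0 R
  rw [base_zero] at this
  simpa using this

lemma tri_eq_biUnion (v : V) (R : ℕ) :
    t.tri v R = ⋃ j ∈ Finset.range (R+1), t.base v j := by
  ext y
  simp only [TreeData.tri, Set.mem_setOf_eq, Set.mem_iUnion, Finset.mem_range,
    Nat.lt_succ_iff, TreeData.base]
  exact ⟨fun ⟨j, hj, he⟩ => ⟨j, hj, he⟩, fun ⟨j, hj, he⟩ => ⟨j, hj, he⟩⟩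

lemma sum_two_pow_le (n : ℕ) : ∑ j ∈ Finset.range n, 2^j ≤ 2^n := by
  induction n with
  | zero => simp
  | succ n ih => rw [Finset.sum_range_succ]; calc _ ≤ 2^n + 2^n := by omega
                 _ = 2^(n+1) := by ring

lemma card_tri_sum_le (hthick : t.Thick) (v : V) (R : ℕ) :
    ∑ j ∈ Finset.range (R+1), (t.base v j).ncard ≤ 2 * (t.base v R).ncard := by
  have key : ∀ j ∈ Finset.range (R+1), 2^R * (t.base v j).ncard ≤ 2^j * (t.base v R).ncard := by
    intro j hj
    rw [Finset.mem_range, Nat.lt_succ_iff] at hj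
    have := card_base_ge t hthick v j (R - j)
    rw [Nat.add_sub_cancel' hj] at this
    calc 2^R * (t.base v j).ncard = 2^j * (2^(R-j) * (t.base v j).ncard) := by
          rw [← mul_assoc, ← pow_add, Nat.add_sub_cancel' hj]
      _ ≤ 2^j * (t.base v R).ncard := Nat.mul_le_mul_left _ this
  have h1 : 2^R * (∑ j ∈ Finset.range (R+1), (t.base v j).ncard)
      ≤ 2^R * (2 * (t.base v R).ncard) := by
    rw [Finset.mul_sum]
    calc ∑ j ∈ Finset.range (R+1), 2^R * (t.base v j).ncard
        ≤ ∑ j ∈ Finset.range (R+1), 2^j * (t.base v R).ncard := Finset.sum_le_sum key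
      _ = (∑ j ∈ Finset.range (R+1), 2^j) * (t.base v R).ncard := by rw [Finset.sum_mul]
      _ ≤ 2^(R+1) * (t.base v R).ncard :=
          Nat.mul_le_mul_right _ (sum_two_pow_le (R+1))
      _ = 2^R * (2 * (t.base v R).ncard) := by ring
  exact Nat.le_of_mul_le_mul_left h1 (by positivity)

end Tree

section Main
variable {V : Type*} (t : TreeData V)

lemma esize_tri_le (hthick : t.Thick) (v : V) (R : ℕ) :
    TreeData.esize (t.tri v R) ≤ 2 * ((t.base v R).ncard : ℝ≥0∞) := by
  have hset : t.tri v R = ⋃ j : {j // j ∈ Finset.range (R+1)}, t.base v j.1 := by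
    rw [tri_eq_biUnion]
    ext y
    simp [Set.mem_iUnion]
  calc TreeData.esize (t.tri v R)
      ≤ ∑' j : {j // j ∈ Finset.range (R+1)}, TreeData.esize (t.base v j.1) := by
        rw [TreeData.esize, hset]
        exact aux_esize_iUnion_le _
    _ = ∑ j ∈ Finset.range (R+1), TreeData.esize (t.base v j) :=
        Finset.tsum_subtype _ fun j => TreeData.esize (t.base v j)
    _ = ∑ j ∈ Finset.range (R+1), ((t.base v j).ncard : ℝ≥0∞) :=
        Finset.sum_congr rfl fun j _ => aux_esize_finite (base_finite t v j)
    _ ≤ 2 * ((t.base v R).ncard : ℝ≥0∞) := by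
        have h := card_tri_sum_le t hthick v R
        exact_mod_cast Nat.cast_le.2 h
end Main

/-- The uncentred base maximal operator `ℬᵘ` is of weak type `(1,1)`
with constant `2`. -/
theorem stmt6 {V : Type*} (t : TreeData V) (hthick : t.Thick) (f : V → ℝ)
    (hf : ∑' x, TreeData.nn f x ≠ ∞) (α : ℝ≥0∞) (hα : 0 < α) :
    TreeData.esize {x | α < t.ubmax f x} ≤ 2 / α * ∑' x, TreeData.nn f x := by
  classical
  rcases eq_or_ne α ⊤ with rfl | hα'
  · have hempty : {x | (⊤:ℝ≥0∞) < t.ubmax f x} = ∅ := by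
      ext x; simp [not_top_lt]
    rw [hempty]
    simp [TreeData.esize]
  set F := ∑' x, TreeData.nn f x with hF
  set Bad : V → ℕ → Prop := fun v R =>
    α * ((t.base v R).ncard : ℝ≥0∞) < ∑' y : t.base v R, (‖f y‖₊ : ℝ≥0∞) with hBadDef
  have hsumle : ∀ (S : Set V), (∑' y : S, (‖f y‖₊ : ℝ≥0∞)) ≤ F := by
    intro S
    rw [tsum_subtype S (fun y => ((‖f y‖₊ : ℝ≥0∞)))]
    refine ENNReal.tsum_le_tsum fun y => ?_
    by_cases hy : y ∈ S
    · rw [Set.indicator_of_mem hy]; exact le_rfl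
    · simp [Set.indicator_of_notMem hy]
  have hcard_ne : ∀ v R, ((t.base v R).ncard : ℝ≥0∞) ≠ 0 := by
    intro v R
    have h1 : 1 ≤ (t.base v R).ncard :=
      le_trans (Nat.one_le_two_pow) (two_pow_le_card_base t hthick v R)
    exact Nat.cast_ne_zero.2 (by omega)
  have hbad_of_avg : ∀ v R, α < t.setAvg (t.base v R) f → Bad v R := by
    intro v R h
    rw [TreeData.setAvg] at h
    exact (ENNReal.lt_div_iff_mul_lt (Or.inl (hcard_ne v R))
      (Or.inl (ENNReal.natCast_ne_top _))).1 h
  obtain ⟨N, hNgt⟩ := ENNReal.exists_nat_gt (ENNReal.div_lt_top hf hα.ne').ne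
  have hRle : ∀ v R, Bad v R → R ≤ N := by
    intro v R hb
    by_contra hR
    push_neg at hR
    have h2 : ((2:ℝ≥0∞))^R < F / α := by
      rw [ENNReal.lt_div_iff_mul_lt (Or.inl hα.ne') (Or.inl hα')]
      calc (2:ℝ≥0∞)^R * α = α * 2^R := mul_comm _ _
        _ ≤ α * ((t.base v R).ncard : ℝ≥0∞) := by
            gcongr
            exact_mod_cast Nat.cast_le.2 (two_pow_le_card_base t hthick v R)
        _ < _ := hb
        _ ≤ F := hsumle _
    have h4 : (N:ℝ≥0∞) < 2^N := by exact_mod_cast (Nat.lt_two_pow_self (n := N))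
    have h5 : (2:ℝ≥0∞)^N ≤ 2^R := pow_le_pow_right₀ one_le_two hR.le
    exact absurd (lt_trans hNgt (lt_of_lt_of_le h4 h5)) (not_lt.2 h2.le)
  set MaxBad : V × ℕ → Prop := fun p =>
    Bad p.1 p.2 ∧ ∀ T, p.2 < T → ¬ Bad (t.pred^[T - p.2] p.1) T with hMBDef
  have hcover : {x | α < t.ubmax f x} ⊆ ⋃ p : {p : V × ℕ // MaxBad p}, t.tri p.1.1 p.1.2 := by
    intro x hx
    simp only [Set.mem_setOf_eq, TreeData.ubmax, lt_iSup_iff] at hx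
    obtain ⟨v, R, hxT, havg⟩ := hx
    have hb : Bad v R := hbad_of_avg v R havg
    set A : Set ℕ := {S | R ≤ S ∧ Bad (t.pred^[S - R] v) S} with hA
    have hAne : A.Nonempty := ⟨R, le_rfl, by simpa using hb⟩
    have hAbdd : BddAbove A := ⟨N, fun S hS => hRle _ S hS.2⟩
    set S₀ := sSup A with hS0
    have hS0mem : S₀ ∈ A := Nat.sSup_mem hAne hAbdd
    obtain ⟨hRS0, hbadS0⟩ := hS0mem
    refine Set.mem_iUnion.2 ⟨⟨(t.pred^[S₀ - R] v, S₀), hbadS0, ?_⟩, ?_⟩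
    · intro T hT hbT
      have hTA : T ∈ A := by
        refine ⟨le_trans hRS0 hT.le, ?_⟩
        have heq : t.pred^[T - S₀] (t.pred^[S₀ - R] v) = t.pred^[T - R] v := by
          rw [← Function.iterate_add_apply]
          congr 1
          omega
        have hbT' : Bad (t.pred^[T - S₀] (t.pred^[S₀ - R] v)) T := hbT
        rwa [heq] at hbT'
      exact absurd (le_csSup hAbdd hTA) (not_le.2 hT)
    · show x ∈ t.tri (t.pred^[S₀ - R] v) S₀
      obtain ⟨j, hjR, hj⟩ := hxT
      exact ⟨j + (S₀ - R), by omega, by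
        rw [show j + (S₀ - R) = (S₀ - R) + j from by omega,
          Function.iterate_add_apply, hj]⟩
  have key : ∀ p q : V × ℕ, MaxBad p → MaxBad q → p.2 ≤ q.2 →
      (t.base p.1 p.2 ∩ t.base q.1 q.2).Nonempty → p = q := by
    rintro ⟨v, R⟩ ⟨w, S⟩ hp hq hRS ⟨y, hyv, hyw⟩
    have hvy : t.pred^[R] y = v := hyv
    have hwy : t.pred^[S] y = w := hyw
    simp only at hRS
    have hpw : t.pred^[S - R] v = w := by
      rw [← hvy, ← Function.iterate_add_apply,
        show S - R + R = S from by omega]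
      exact hwy
    rcases eq_or_lt_of_le hRS with heq | hlt
    · subst heq
      simp only [Nat.sub_self, Function.iterate_zero_apply] at hpw
      rw [hpw]
    · exact absurd (by rw [hpw]; exact hq.1) (hp.2 S hlt)
  have hdisj : Pairwise (Function.onFun Disjoint
      (fun p : {p : V × ℕ // MaxBad p} => t.base p.1.1 p.1.2)) := by
    intro p q hpq
    rw [Function.onFun, Set.disjoint_iff_inter_eq_empty]
    by_contra hne
    rw [← Ne, ← Set.nonempty_iff_ne_empty] at hne
    rcases le_total p.1.2 q.1.2 with h | h
    · exact hpq (Subtype.ext (key _ _ p.2 q.2 h hne))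
    · exact hpq (Subtype.ext (key _ _ q.2 p.2 h (by rwa [Set.inter_comm] at hne)).symm)
  calc TreeData.esize {x | α < t.ubmax f x}
      ≤ TreeData.esize (⋃ p : {p : V × ℕ // MaxBad p}, t.tri p.1.1 p.1.2) :=
        aux_esize_mono hcover
    _ ≤ ∑' p : {p : V × ℕ // MaxBad p}, TreeData.esize (t.tri p.1.1 p.1.2) :=
        aux_esize_iUnion_le _
    _ ≤ ∑' p : {p : V × ℕ // MaxBad p},
          2 / α * (∑' y : t.base p.1.1 p.1.2, (‖f y‖₊ : ℝ≥0∞)) := by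
        refine ENNReal.tsum_le_tsum fun p => ?_
        obtain ⟨⟨v, R⟩, hp⟩ := p
        have h1 := esize_tri_le t hthick v R
        have h2 : ((t.base v R).ncard : ℝ≥0∞)
            ≤ (∑' y : t.base v R, (‖f y‖₊ : ℝ≥0∞)) / α := by
          rw [ENNReal.le_div_iff_mul_le (Or.inl hα.ne') (Or.inl hα'), mul_comm]
          exact hp.1.le
        calc TreeData.esize (t.tri v R) ≤ 2 * ((t.base v R).ncard : ℝ≥0∞) := h1
          _ ≤ 2 * ((∑' y : t.base v R, (‖f y‖₊ : ℝ≥0∞)) / α) := by gcongr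
          _ = 2 / α * (∑' y : t.base v R, (‖f y‖₊ : ℝ≥0∞)) := by
              rw [div_eq_mul_inv, div_eq_mul_inv]; ring
    _ = 2 / α * ∑' p : {p : V × ℕ // MaxBad p},
          (∑' y : t.base p.1.1 p.1.2, (‖f y‖₊ : ℝ≥0∞)) := ENNReal.tsum_mul_left
    _ ≤ 2 / α * F := by
        gcongr
        exact aux_tsum_disjoint_le (fun y => (‖f y‖₊ : ℝ≥0∞)) _ hdisj
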